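/- If g(K_a, K_b) = c for some a, b ≥ 2, then for all i, j ≥ 1 we have g(K_{1+(a-1)i}, K_{1+(b-1)j}) ≤ c i j. -/

import Mathlib

open Finset

/-- Edge set of the complete bipartite graph with parts `A` and `B`. -/
def bicliqueEdges {V : Type*} (A B : Finset V) : Set (Sym2 V) :=
  {e | ∃ a ∈ A, ∃ b ∈ B, e = s(a, b)}

/-- `f_2(G)`: minimum number of complete bipartite subgraphs needed to partition
the edge set of the graph `G`. -/
noncomputable def f2 {V : Type*} (G : SimpleGraph V) : ℕ :=
  sInf {m | ∃ A B : Fin m → Finset V,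
    (∀ k, Disjoint (A k) (B k)) ∧
    (∀ k, bicliqueEdges (A k) (B k) ⊆ G.edgeSet) ∧
    ∀ e ∈ G.edgeSet, ∃! k, e ∈ bicliqueEdges (A k) (B k)}

/-- Edge set of the complete `r`-partite `r`-uniform hypergraph with parts `P`. -/
def crossEdges {V : Type*} [DecidableEq V] {r : ℕ} (P : Fin r → Finset V) : Set (Finset V) :=
  {e | ∃ f : Fin r → V, (∀ i, f i ∈ P i) ∧ e = Finset.image f Finset.univ}

/-- `f_r(n)`: minimum number of complete `r`-partite `r`-uniform hypergraphs needed to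
partition the edge set of the complete `r`-uniform hypergraph on `n` vertices. -/
noncomputable def fr (r n : ℕ) : ℕ :=
  sInf {m | ∃ P : Fin m → Fin r → Finset (Fin n),
    (∀ k, Pairwise (Function.onFun Disjoint (P k))) ∧
    ∀ e : Finset (Fin n), e.card = r → ∃! k, e ∈ crossEdges (P k)}

/-- `g(G,H)`: minimum number of blocks (products of edge sets of complete
bipartite subgraphs of `G` and `H` respectively) needed to partition `E(G) × E(H)`. -/
noncomputable def gGH {V W : Type*} (G : SimpleGraph V) (H : SimpleGraph W) : ℕ :=
  sInf {m | ∃ A B : Fin m → Finset V, ∃ C D : Fin m → Finset W,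
    (∀ k, Disjoint (A k) (B k)) ∧ (∀ k, Disjoint (C k) (D k)) ∧
    (∀ k, bicliqueEdges (A k) (B k) ⊆ G.edgeSet) ∧
    (∀ k, bicliqueEdges (C k) (D k) ⊆ H.edgeSet) ∧
    ∀ p : Sym2 V × Sym2 W, p.1 ∈ G.edgeSet → p.2 ∈ H.edgeSet →
      ∃! k, p.1 ∈ bicliqueEdges (A k) (B k) ∧ p.2 ∈ bicliqueEdges (C k) (D k)}

/-- `g(n) = g(K_n, K_n)`. -/
noncomputable def gn (n : ℕ) : ℕ :=
  gGH (SimpleGraph.completeGraph (Fin n)) (SimpleGraph.completeGraph (Fin n))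

-- ### aux lemmas

lemma mem_bicliqueEdges {V : Type*} {A B : Finset V} {u v : V} :
    s(u,v) ∈ bicliqueEdges A B ↔ (u ∈ A ∧ v ∈ B) ∨ (v ∈ A ∧ u ∈ B) := by
  constructor
  · rintro ⟨x, hx, y, hy, h⟩
    rw [Sym2.eq_iff] at h
    rcases h with ⟨rfl, rfl⟩ | ⟨rfl, rfl⟩ <;> tauto
  · rintro (⟨h1, h2⟩ | ⟨h1, h2⟩)
    · exact ⟨u, h1, v, h2, rfl⟩
    · exact ⟨v, h1, u, h2, Sym2.eq_swap⟩

lemma mem_complete_edge {n : ℕ} {u v : Fin n} :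
    s(u,v) ∈ (SimpleGraph.completeGraph (Fin n)).edgeSet ↔ u ≠ v := by
  simp [SimpleGraph.completeGraph]

lemma biclique_subset_complete {n : ℕ} {A B : Finset (Fin n)} (h : Disjoint A B) :
    bicliqueEdges A B ⊆ (SimpleGraph.completeGraph (Fin n)).edgeSet := by
  rintro e ⟨x, hx, y, hy, rfl⟩
  rw [mem_complete_edge]
  exact fun hxy => (Finset.disjoint_left.mp h hx) (hxy ▸ hy)

lemma existsUnique_of_equiv {α β : Type*} (e : α ≃ β) {p : β → Prop}
    (h : ∃! x : α, p (e x)) : ∃! y : β, p y := by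
  obtain ⟨x, hx, hxu⟩ := h
  refine ⟨e x, hx, fun y hy => ?_⟩
  have h2 : e.symm y = x := hxu _ (by simpa using hy)
  rw [← h2, Equiv.apply_symm_apply]

-- ### star partition (for nonemptiness)

def starA (n : ℕ) (l : Fin (n-1)) : Finset (Fin n) := {⟨l.val, by omega⟩}

def starB (n : ℕ) (l : Fin (n-1)) : Finset (Fin n) :=
  Finset.univ.filter fun x => l.val < x.val

lemma star_disj (n : ℕ) (l : Fin (n-1)) : Disjoint (starA n l) (starB n l) := by
  simp only [starA, starB, Finset.disjoint_left, Finset.mem_singleton, Finset.mem_filter]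
  rintro x rfl ⟨-, h⟩
  exact lt_irrefl _ h

lemma star_mem {n : ℕ} {u v : Fin n} (huv : u ≠ v) (l : Fin (n-1)) :
    s(u,v) ∈ bicliqueEdges (starA n l) (starB n l) ↔ l.val = min u.val v.val := by
  have hne : u.val ≠ v.val := fun h => huv (Fin.ext h)
  rw [mem_bicliqueEdges]
  simp only [starA, starB, Finset.mem_singleton, Finset.mem_filter, Finset.mem_univ,
    true_and, Fin.ext_iff]
  omega

-- ### blow-up machinery

def grp (a i : ℕ) (v : Fin (1 + (a-1)*i)) : ℕ :=
  if v.val = 0 then i else (v.val - 1) / (a - 1)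

def colr (a i : ℕ) (ha : 2 ≤ a) (s : ℕ) (v : Fin (1 + (a-1)*i)) : Fin a :=
  ⟨if grp a i v = s then (v.val - 1) % (a-1) + 1 else 0, by
    split
    · have : (v.val - 1) % (a-1) < a-1 := Nat.mod_lt _ (by omega)
      omega
    · omega⟩

lemma grp_lt (a i : ℕ) (ha : 2 ≤ a) (v : Fin (1 + (a-1)*i)) (hv : v.val ≠ 0) :
    grp a i v < i := by
  have hvl := v.isLt
  have hcomm : (a-1)*i = i*(a-1) := Nat.mul_comm _ _
  unfold grp
  rw [if_neg hv, Nat.div_lt_iff_lt_mul (by omega)]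
  omega

lemma grp_le (a i : ℕ) (ha : 2 ≤ a) (v : Fin (1 + (a-1)*i)) : grp a i v ≤ i := by
  rcases eq_or_ne v.val 0 with h | h
  · unfold grp; rw [if_pos h]
  · exact le_of_lt (grp_lt a i ha v h)

lemma grp_min_lt (a i : ℕ) (ha : 2 ≤ a) {u v : Fin (1 + (a-1)*i)} (huv : u ≠ v) :
    min (grp a i u) (grp a i v) < i := by
  have : u.val ≠ v.val := fun h => huv (Fin.ext h)
  rcases Nat.eq_zero_or_pos u.val with h | h
  · have := grp_lt a i ha v (by omega)
    omega
  · have := grp_lt a i ha u (by omega)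
    omega

lemma colr_key {a i : ℕ} (ha : 2 ≤ a) {u v : Fin (1 + (a-1)*i)} (huv : u ≠ v) (s : ℕ) :
    (s ≤ grp a i u ∧ s ≤ grp a i v ∧ colr a i ha s u ≠ colr a i ha s v) ↔
      s = min (grp a i u) (grp a i v) := by
  have hne : u.val ≠ v.val := fun h => huv (Fin.ext h)
  have hcol : ∀ w : Fin (1 + (a-1)*i),
      (colr a i ha s w).val = if grp a i w = s then (w.val - 1) % (a-1) + 1 else 0 :=
    fun w => rfl
  constructor
  · rintro ⟨h1, h2, h3⟩
    by_contra hs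
    have hu : grp a i u ≠ s := by
      intro h
      apply hs
      omega
    have hv : grp a i v ≠ s := by
      intro h
      apply hs
      omega
    apply h3
    apply Fin.ext
    rw [hcol, hcol, if_neg hu, if_neg hv]
  · intro hs
    refine ⟨by omega, by omega, ?_⟩
    intro hcv
    have hval := congrArg Fin.val hcv
    rw [hcol, hcol] at hval
    rcases eq_or_ne (grp a i u) (grp a i v) with hg | hg
    · -- same group s; both nonzero
      have hgu : grp a i u = s := by omega
      have hgv : grp a i v = s := by omega
      have hsi : s < i := by
        have := grp_min_lt a i ha huv
        omega
      have hu0 : u.val ≠ 0 := by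
        intro h
        have : grp a i u = i := by unfold grp; rw [if_pos h]
        omega
      have hv0 : v.val ≠ 0 := by
        intro h
        have : grp a i v = i := by unfold grp; rw [if_pos h]
        omega
      rw [if_pos hgu, if_pos hgv] at hval
      have hmod : (u.val - 1) % (a-1) = (v.val - 1) % (a-1) := by omega
      have hdiv : (u.val - 1) / (a-1) = (v.val - 1) / (a-1) := by
        have h1 : grp a i u = (u.val - 1) / (a-1) := by unfold grp; rw [if_neg hu0]
        have h2 : grp a i v = (v.val - 1) / (a-1) := by unfold grp; rw [if_neg hv0]
        omega
      have e1 := Nat.div_add_mod (u.val - 1) (a-1)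
      have e2 := Nat.div_add_mod (v.val - 1) (a-1)
      have e3 : (a-1) * ((u.val-1)/(a-1)) = (a-1) * ((v.val-1)/(a-1)) := by rw [hdiv]
      omega
    · -- groups differ; exactly one equals s
      rcases eq_or_ne (grp a i u) s with hgu | hgu
      · have hgv : grp a i v ≠ s := by omega
        rw [if_pos hgu, if_neg hgv] at hval
        omega
      · have hgv : grp a i v = s := by omega
        rw [if_neg hgu, if_pos hgv] at hval
        omega

def blowSet (a i : ℕ) (ha : 2 ≤ a) (s : ℕ) (A : Finset (Fin a)) :
    Finset (Fin (1 + (a-1)*i)) :=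
  Finset.univ.filter (fun v => s ≤ grp a i v ∧ colr a i ha s v ∈ A)

lemma mem_blowSet {a i : ℕ} {ha : 2 ≤ a} {s : ℕ} {A : Finset (Fin a)}
    {v : Fin (1 + (a-1)*i)} :
    v ∈ blowSet a i ha s A ↔ s ≤ grp a i v ∧ colr a i ha s v ∈ A := by
  simp [blowSet]

lemma blow_disjoint {a i : ℕ} (ha : 2 ≤ a) (s : ℕ) {A B : Finset (Fin a)}
    (h : Disjoint A B) : Disjoint (blowSet a i ha s A) (blowSet a i ha s B) := by
  rw [Finset.disjoint_left]
  intro x hx hy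
  rw [mem_blowSet] at hx hy
  exact Finset.disjoint_left.mp h hx.2 hy.2

lemma mem_blow_biclique {a i : ℕ} (ha : 2 ≤ a) {A B : Finset (Fin a)}
    (hAB : Disjoint A B) {u v : Fin (1 + (a-1)*i)} (huv : u ≠ v) (s : ℕ) :
    s(u,v) ∈ bicliqueEdges (blowSet a i ha s A) (blowSet a i ha s B) ↔
      s = min (grp a i u) (grp a i v) ∧
        s(colr a i ha s u, colr a i ha s v) ∈ bicliqueEdges A B := by
  rw [mem_bicliqueEdges, mem_bicliqueEdges]
  simp only [mem_blowSet]
  constructor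
  · rintro (⟨⟨h1, h2⟩, h3, h4⟩ | ⟨⟨h1, h2⟩, h3, h4⟩)
    · have hne : colr a i ha s u ≠ colr a i ha s v :=
        fun h => Finset.disjoint_left.mp hAB h2 (h ▸ h4)
      exact ⟨(colr_key ha huv s).mp ⟨h1, h3, hne⟩, Or.inl ⟨h2, h4⟩⟩
    · have hne : colr a i ha s u ≠ colr a i ha s v := by
        intro h
        rw [h] at h4
        exact Finset.disjoint_left.mp hAB h2 h4
      exact ⟨(colr_key ha huv s).mp ⟨h3, h1, hne⟩, Or.inr ⟨h2, h4⟩⟩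
  · rintro ⟨hs, (⟨h2, h4⟩ | ⟨h2, h4⟩)⟩
    · exact Or.inl ⟨⟨by omega, h2⟩, by omega, h4⟩
    · exact Or.inr ⟨⟨by omega, h2⟩, by omega, h4⟩

-- nonemptiness of the gGH defining set for complete graphs
lemma gGH_complete_mem (a b : ℕ) (ha : 2 ≤ a) (hb : 2 ≤ b) :
    ((a-1)*(b-1)) ∈ {m | ∃ A B : Fin m → Finset (Fin a), ∃ C D : Fin m → Finset (Fin b),
    (∀ k, Disjoint (A k) (B k)) ∧ (∀ k, Disjoint (C k) (D k)) ∧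
    (∀ k, bicliqueEdges (A k) (B k) ⊆ (SimpleGraph.completeGraph (Fin a)).edgeSet) ∧
    (∀ k, bicliqueEdges (C k) (D k) ⊆ (SimpleGraph.completeGraph (Fin b)).edgeSet) ∧
    ∀ p : Sym2 (Fin a) × Sym2 (Fin b), p.1 ∈ (SimpleGraph.completeGraph (Fin a)).edgeSet →
      p.2 ∈ (SimpleGraph.completeGraph (Fin b)).edgeSet →
      ∃! k, p.1 ∈ bicliqueEdges (A k) (B k) ∧ p.2 ∈ bicliqueEdges (C k) (D k)} := by
  refine ⟨fun q => starA a (finProdFinEquiv.symm q).1,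
          fun q => starB a (finProdFinEquiv.symm q).1,
          fun q => starA b (finProdFinEquiv.symm q).2,
          fun q => starB b (finProdFinEquiv.symm q).2,
          fun k => star_disj a _, fun k => star_disj b _,
          fun k => biclique_subset_complete (star_disj a _),
          fun k => biclique_subset_complete (star_disj b _), ?_⟩
  rintro ⟨e, f⟩ he hf
  induction e using Sym2.inductionOn with | hf u v =>
  induction f using Sym2.inductionOn with | hf x y =>
  simp only at he hf ⊢
  rw [mem_complete_edge] at he hf
  apply existsUnique_of_equiv finProdFinEquiv
  simp only [Equiv.symm_apply_apply]
  have hu : u.val ≠ v.val := fun h => he (Fin.ext h)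
  have hx : x.val ≠ y.val := fun h => hf (Fin.ext h)
  have h1 := u.isLt; have h2 := v.isLt; have h3 := x.isLt; have h4 := y.isLt
  refine ⟨(⟨min u.val v.val, by omega⟩, ⟨min x.val y.val, by omega⟩),
    ⟨(star_mem he _).mpr rfl, (star_mem hf _).mpr rfl⟩, ?_⟩
  rintro ⟨l, r⟩ ⟨hl, hr⟩
  rw [star_mem he] at hl
  rw [star_mem hf] at hr
  exact Prod.ext (Fin.ext hl) (Fin.ext hr)

theorem stmt5 (a b c : ℕ) (ha : 2 ≤ a) (hb : 2 ≤ b)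
    (hc : gGH (SimpleGraph.completeGraph (Fin a)) (SimpleGraph.completeGraph (Fin b)) = c) :
    ∀ i j : ℕ, 1 ≤ i → 1 ≤ j →
      gGH (SimpleGraph.completeGraph (Fin (1 + (a - 1) * i))) (SimpleGraph.completeGraph (Fin (1 + (b - 1) * j))) ≤
        c * i * j := by
  intro i j hi hj
  have hmem : gGH (SimpleGraph.completeGraph (Fin a)) (SimpleGraph.completeGraph (Fin b)) ∈
      {m | ∃ A B : Fin m → Finset (Fin a), ∃ C D : Fin m → Finset (Fin b),
      (∀ k, Disjoint (A k) (B k)) ∧ (∀ k, Disjoint (C k) (D k)) ∧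
      (∀ k, bicliqueEdges (A k) (B k) ⊆ (SimpleGraph.completeGraph (Fin a)).edgeSet) ∧
      (∀ k, bicliqueEdges (C k) (D k) ⊆ (SimpleGraph.completeGraph (Fin b)).edgeSet) ∧
      ∀ p : Sym2 (Fin a) × Sym2 (Fin b), p.1 ∈ (SimpleGraph.completeGraph (Fin a)).edgeSet →
        p.2 ∈ (SimpleGraph.completeGraph (Fin b)).edgeSet →
        ∃! k, p.1 ∈ bicliqueEdges (A k) (B k) ∧ p.2 ∈ bicliqueEdges (C k) (D k)} :=
    Nat.sInf_mem ⟨_, gGH_complete_mem a b ha hb⟩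
  rw [hc] at hmem
  obtain ⟨A, B, C, D, hAB, hCD, -, -, huniq⟩ := hmem
  -- index equivalence
  let E : (Fin c × Fin i) × Fin j ≃ Fin (c * i * j) :=
    (finProdFinEquiv.prodCongr (Equiv.refl (Fin j))).trans finProdFinEquiv
  apply Nat.sInf_le
  refine ⟨fun q => blowSet a i ha (E.symm q).1.2.val (A (E.symm q).1.1),
          fun q => blowSet a i ha (E.symm q).1.2.val (B (E.symm q).1.1),
          fun q => blowSet b j hb (E.symm q).2.val (C (E.symm q).1.1),
          fun q => blowSet b j hb (E.symm q).2.val (D (E.symm q).1.1),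
          fun k => blow_disjoint ha _ (hAB _), fun k => blow_disjoint hb _ (hCD _),
          fun k => biclique_subset_complete (blow_disjoint ha _ (hAB _)),
          fun k => biclique_subset_complete (blow_disjoint hb _ (hCD _)), ?_⟩
  rintro ⟨e, f⟩ he hf
  induction e using Sym2.inductionOn with | hf u v =>
  induction f using Sym2.inductionOn with | hf x y =>
  simp only at he hf ⊢
  rw [mem_complete_edge] at he hf
  apply existsUnique_of_equiv E
  simp only [Equiv.symm_apply_apply]
  simp only [mem_blow_biclique ha (hAB _) he, mem_blow_biclique hb (hCD _) hf]
  set s₀ := min (grp a i u) (grp a i v) with hs₀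
  set t₀ := min (grp b j x) (grp b j y) with ht₀
  have hs₀i : s₀ < i := grp_min_lt a i ha he
  have ht₀j : t₀ < j := grp_min_lt b j hb hf
  have hcu : colr a i ha s₀ u ≠ colr a i ha s₀ v :=
    ((colr_key ha he s₀).mpr rfl).2.2
  have hcx : colr b j hb t₀ x ≠ colr b j hb t₀ y :=
    ((colr_key hb hf t₀).mpr rfl).2.2
  obtain ⟨k₀, hk₀, hk₀u⟩ := huniq (s(colr a i ha s₀ u, colr a i ha s₀ v),
    s(colr b j hb t₀ x, colr b j hb t₀ y))
    (mem_complete_edge.mpr hcu) (mem_complete_edge.mpr hcx)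
  simp only at hk₀ hk₀u
  refine ⟨((k₀, ⟨s₀, hs₀i⟩), ⟨t₀, ht₀j⟩), ⟨⟨rfl, hk₀.1⟩, ⟨rfl, hk₀.2⟩⟩, ?_⟩
  rintro ⟨⟨k, s⟩, t⟩ ⟨⟨hs, hk1⟩, ht, hk2⟩
  simp only at hs hk1 ht hk2
  have hsv : s = (⟨s₀, hs₀i⟩ : Fin i) := Fin.ext hs
  have htv : t = (⟨t₀, ht₀j⟩ : Fin j) := Fin.ext ht
  subst hsv htv
  simp only at hk1 hk2
  have : k = k₀ := hk₀u k ⟨hk1, hk2⟩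
  subst this
  rfl
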